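/- Let m > 0 and ω ∈ ℝ with |ω| ≠ m. For each ε > 0 let k_ε ∈ ℂ be any complex number with Im k_ε > 0 and k_ε² = (ω + iε)² − m². Then lim_{ε → 0+} ε·(∫_ℝ |∂ₓ exp(i·k_ε·|x|)|² dx + m² ∫_ℝ |exp(i·k_ε·|x|)|² dx) = n(ω), where n(ω) = |ω|·√(ω² − m²) if |ω| > m and n(ω) = 0 if |ω| < m. -/

import Mathlib

open MeasureTheory Filter

lemma aux_integral_exp_neg_mul_abs (c : ℝ) (hc : 0 < c) :
    ∫ x : ℝ, Real.exp (-(c * |x|)) = 2 / c := by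
  rw [show (fun x : ℝ => Real.exp (-(c * |x|))) = (fun x : ℝ => (fun y => Real.exp (-(c*y))) |x|) from rfl,
    integral_comp_abs (f := fun y => Real.exp (-(c*y)))]
  have h := integral_comp_mul_left_Ioi (fun y => Real.exp (-y)) 0 hc
  simp only [mul_zero, smul_eq_mul] at h
  rw [show (∫ x in Set.Ioi (0:ℝ), Real.exp (-(c*x))) = ∫ x in Set.Ioi (0:ℝ), (fun y => Real.exp (-y)) (c*x) from rfl, h,
    integral_exp_neg_Ioi_zero]
  field_simp

lemma aux_norm_exp_sq (k : ℂ) (x : ℝ) :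
    ‖Complex.exp (Complex.I * k * (x:ℂ))‖^2 = Real.exp (-(2*k.im*x)) := by
  rw [Complex.norm_exp, sq, ← Real.exp_add]
  congr 1
  simp [Complex.mul_re, Complex.mul_im]
  ring

-- the H¹ expression evaluates to ε(|k|²+m²)/Im k
lemma aux_eval (m : ℝ) (k : ℂ) (hb : 0 < k.im) :
    ((∫ x : ℝ, ‖Complex.I * k * (Real.sign x : ℂ) *
          Complex.exp (Complex.I * k * (|x| : ℝ))‖ ^ 2)
      + m ^ 2 * ∫ x : ℝ, ‖Complex.exp (Complex.I * k * (|x| : ℝ))‖ ^ 2)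
    = (‖k‖^2 + m^2) / k.im := by
  have hI2 : (∫ x : ℝ, ‖Complex.exp (Complex.I * k * (|x| : ℝ))‖ ^ 2) = 1 / k.im := by
    have : (fun x : ℝ => ‖Complex.exp (Complex.I * k * (|x| : ℝ))‖ ^ 2)
        = fun x : ℝ => Real.exp (-(2*k.im * |x|)) := by
      funext x; exact aux_norm_exp_sq k |x|
    rw [this, aux_integral_exp_neg_mul_abs _ (by linarith)]
    rw [div_eq_div_iff (by linarith) hb.ne']
    ring
  have hI1 : (∫ x : ℝ, ‖Complex.I * k * (Real.sign x : ℂ) *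
          Complex.exp (Complex.I * k * (|x| : ℝ))‖ ^ 2)
      = ‖k‖^2 / k.im := by
    have hae : ∀ᵐ x : ℝ, x ≠ 0 := by
      rw [ae_iff]
      simp only [ne_eq, not_not]
      have : {x : ℝ | x = 0} = {(0:ℝ)} := by ext x; simp
      rw [this, Real.volume_singleton]
    have hcongr : (∫ x : ℝ, ‖Complex.I * k * (Real.sign x : ℂ) *
          Complex.exp (Complex.I * k * (|x| : ℝ))‖ ^ 2)
        = ∫ x : ℝ, ‖k‖^2 * ‖Complex.exp (Complex.I * k * (|x| : ℝ))‖ ^ 2 := by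
      refine integral_congr_ae ?_
      filter_upwards [hae] with x hx
      have hs : ‖((Real.sign x : ℝ) : ℂ)‖ = 1 := by
        rcases Real.sign_apply_eq_of_ne_zero x hx with h | h <;> rw [h] <;> norm_num
      rw [norm_mul, norm_mul, norm_mul, hs, Complex.norm_I]
      ring
    rw [hcongr, integral_const_mul, hI2]
    ring
  rw [hI1, hI2]
  ring


theorem limit_weight_on_continuous_spectrum
    (m ω : ℝ) (hm : 0 < m) (hω : |ω| ≠ m) (kε : ℝ → ℂ)
    (hk : ∀ ε > (0 : ℝ), 0 < (kε ε).im ∧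
      (kε ε) ^ 2 = ((ω : ℂ) + (ε : ℂ) * Complex.I) ^ 2 - (m : ℂ) ^ 2) :
    Tendsto (fun ε : ℝ =>
        ε * ((∫ x : ℝ, ‖Complex.I * kε ε * (Real.sign x : ℂ) *
                Complex.exp (Complex.I * kε ε * (|x| : ℝ))‖ ^ 2)
          + m ^ 2 * ∫ x : ℝ, ‖Complex.exp (Complex.I * kε ε * (|x| : ℝ))‖ ^ 2))
      (nhdsWithin 0 (Set.Ioi 0))
      (nhds (if m < |ω| then |ω| * Real.sqrt (ω ^ 2 - m ^ 2) else 0)) := by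
  set A : ℝ → ℝ := fun ε => ‖((ω:ℂ) + (ε:ℂ)*Complex.I)^2 - (m:ℂ)^2‖ with hA
  set R : ℝ → ℝ := fun ε => ω^2 - ε^2 - m^2 with hR
  have hAcont : Continuous A := by
    apply continuous_norm.comp
    fun_prop
  have hA0 : A 0 = |ω^2 - m^2| := by
    have h : ((ω:ℂ) + ((0:ℝ):ℂ)*Complex.I)^2 - (m:ℂ)^2 = ((ω^2 - m^2 : ℝ) : ℂ) := by
      push_cast; ring
    simp only [hA, h, Complex.norm_real, Real.norm_eq_abs]
  have hRe : ∀ ε : ℝ, (((ω:ℂ) + (ε:ℂ)*Complex.I)^2 - (m:ℂ)^2).re = R ε := by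
    intro ε; simp [hR, pow_two, Complex.mul_re, Complex.mul_im]
  have hIm : ∀ ε : ℝ, (((ω:ℂ) + (ε:ℂ)*Complex.I)^2 - (m:ℂ)^2).im = 2*ω*ε := by
    intro ε; simp [pow_two, Complex.mul_re, Complex.mul_im]; ring
  have hR0 : R 0 = ω^2 - m^2 := by simp [hR]
  have hRcont : Continuous R := by rw [hR]; fun_prop
  clear_value A R
  have hfacts : ∀ ε : ℝ, 0 < ε →
      ‖kε ε‖^2 = A ε ∧ (kε ε).im ^ 2 = (A ε - R ε)/2 ∧
      A ε ^ 2 = R ε ^2 + (2*ω*ε)^2 := by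
    intro ε hε
    obtain ⟨hb, hk2⟩ := hk ε hε
    have habs : ‖kε ε‖^2 = A ε := by
      rw [← norm_pow, hk2]; simp only [hA]
    have hre : (kε ε).re^2 - (kε ε).im^2 = R ε := by
      rw [← hRe ε, ← hk2]; simp [pow_two, Complex.mul_re]
    have hsq : (kε ε).re^2 + (kε ε).im^2 = A ε := by
      rw [← habs, Complex.sq_norm, Complex.normSq_apply]; ring
    refine ⟨habs, by linarith, ?_⟩
    have h2 : A ε ^ 2 = (((ω:ℂ) + (ε:ℂ)*Complex.I)^2 - (m:ℂ)^2).re^2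
        + (((ω:ℂ) + (ε:ℂ)*Complex.I)^2 - (m:ℂ)^2).im^2 := by
      simp only [hA]
      rw [Complex.sq_norm, Complex.normSq_apply]; ring
    rw [h2, hRe, hIm]
  have hmain : ∀ ε : ℝ, 0 < ε →
      ε * ((∫ x : ℝ, ‖Complex.I * kε ε * (Real.sign x : ℂ) *
                Complex.exp (Complex.I * kε ε * (|x| : ℝ))‖ ^ 2)
          + m ^ 2 * ∫ x : ℝ, ‖Complex.exp (Complex.I * kε ε * (|x| : ℝ))‖ ^ 2)
      = ε * ((A ε + m^2) / (kε ε).im) := by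
    intro ε hε
    obtain ⟨hb, _⟩ := hk ε hε
    rw [aux_eval m (kε ε) hb, (hfacts ε hε).1]
  by_cases hcase : m < |ω|
  · -- continuous spectrum
    rw [if_pos hcase]
    have hωpos : 0 < |ω| := hm.trans hcase
    have hωne : |ω| ≠ 0 := hωpos.ne'
    have hω2 : m^2 < ω^2 := by
      have h := mul_self_lt_mul_self hm.le hcase
      rw [abs_mul_abs_self] at h
      nlinarith
    set G : ℝ → ℝ := fun ε =>
      (A ε + m^2) * Real.sqrt (2*(A ε + R ε)) / (2 * |ω|) with hG
    have hGlim : Tendsto G (nhdsWithin 0 (Set.Ioi 0))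
        (nhds (|ω| * Real.sqrt (ω^2 - m^2))) := by
      have hcont : ContinuousAt G 0 := by
        apply ContinuousAt.div
        · exact ((hAcont.add continuous_const).continuousAt).mul
            ((Real.continuous_sqrt.comp (continuous_const.mul (hAcont.add hRcont))).continuousAt)
        · exact continuousAt_const
        · show (2 * |ω| : ℝ) ≠ 0
          exact mul_ne_zero two_ne_zero hωne
      have hval : G 0 = |ω| * Real.sqrt (ω^2 - m^2) := by
        have hA0' : A 0 = ω^2 - m^2 := by rw [hA0, abs_of_pos (by linarith)]
        simp only [hG, hA0', hR0]
        rw [show 2*((ω^2-m^2) + (ω^2-m^2)) = 2^2*(ω^2-m^2) by ring,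
          Real.sqrt_mul (by positivity), Real.sqrt_sq (by norm_num : (0:ℝ) ≤ 2)]
        rw [div_eq_iff (mul_ne_zero two_ne_zero hωne), ← sq_abs ω]
        ring
      have ht := (hcont.continuousWithinAt (s := Set.Ioi 0)).tendsto
      rw [hval] at ht
      exact ht
    refine hGlim.congr' ?_
    filter_upwards [self_mem_nhdsWithin] with ε hmem
    have hε : 0 < ε := hmem
    obtain ⟨hb, _⟩ := hk ε hε
    obtain ⟨habs, hb2, hA2⟩ := hfacts ε hε
    rw [hmain ε hε]
    have hbb : 0 < (kε ε).im ^2 := by positivity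
    have hAR : 0 < A ε - R ε := by linarith
    have hprod : (A ε - R ε) * (A ε + R ε) = (2 * |ω| * ε)^2 := by
      have : (2*ω*ε)^2 = (2 * |ω| * ε)^2 := by
        rw [mul_pow, mul_pow, mul_pow, mul_pow, sq_abs]
      nlinarith [hA2]
    have hARpos : 0 < A ε + R ε := by
      rcases lt_or_ge 0 (A ε + R ε) with h | h
      · exact h
      · exfalso
        have h1 : (A ε - R ε) * (A ε + R ε) ≤ 0 :=
          mul_nonpos_of_nonneg_of_nonpos hAR.le h
        have h2 : 0 < (2 * |ω| * ε)^2 := by positivity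
        linarith [hprod]
    have hkey : (kε ε).im * Real.sqrt (2*(A ε + R ε)) = 2 * |ω| * ε := by
      rw [← Real.sqrt_sq hb.le, ← Real.sqrt_mul (sq_nonneg _),
        show (kε ε).im^2 * (2*(A ε + R ε)) = (A ε - R ε)*(A ε + R ε) by
          rw [hb2]; ring,
        hprod, Real.sqrt_sq (by positivity)]
    simp only [hG]
    have hsq : 0 < Real.sqrt (2*(A ε + R ε)) := Real.sqrt_pos.mpr (by positivity)
    rw [← mul_div_assoc ε, div_eq_div_iff (mul_ne_zero two_ne_zero hωne) hb.ne']
    linear_combination (A ε + m^2) * hkey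
  · -- spectral gap
    rw [if_neg hcase]
    have h1 : |ω| < m := lt_of_le_of_ne (not_lt.mp hcase) hω
    have hω2 : ω^2 < m^2 := by
      have h := mul_self_lt_mul_self (abs_nonneg ω) h1
      rw [abs_mul_abs_self] at h
      nlinarith
    set G : ℝ → ℝ := fun ε =>
      ε * ((A ε + m^2) / Real.sqrt ((A ε - R ε)/2)) with hG
    have hGlim : Tendsto G (nhdsWithin 0 (Set.Ioi 0)) (nhds 0) := by
      have hA0' : A 0 = m^2 - ω^2 := by
        rw [hA0, abs_of_neg (by linarith : ω^2 - m^2 < 0)]; ring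
      have hden : Real.sqrt ((A 0 - R 0)/2) ≠ 0 := by
        rw [hA0', hR0, show (m^2-ω^2-(ω^2-m^2))/2 = m^2-ω^2 by ring]
        have : (0:ℝ) < m^2 - ω^2 := by linarith
        positivity
      have hcont : ContinuousAt G 0 := by
        apply ContinuousAt.mul continuousAt_id
        apply ContinuousAt.div
        · exact (hAcont.add continuous_const).continuousAt
        · exact (Real.continuous_sqrt.comp ((hAcont.sub hRcont).div_const 2)).continuousAt
        · exact hden
      have hval : G 0 = 0 := by simp [hG]
      have ht := (hcont.continuousWithinAt (s := Set.Ioi 0)).tendsto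
      rw [hval] at ht
      exact ht
    refine hGlim.congr' ?_
    filter_upwards [self_mem_nhdsWithin] with ε hmem
    have hε : 0 < ε := hmem
    obtain ⟨hb, _⟩ := hk ε hε
    obtain ⟨habs, hb2, hA2⟩ := hfacts ε hε
    rw [hmain ε hε]
    simp only [hG]
    rw [← hb2, Real.sqrt_sq hb.le]
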